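/- arXiv:2601.06912 — 3 statements merged into one kernel-verified Lean document; each statement's English description precedes it below -/
import Mathlib

section
/- Let G be a d-regular finite simple graph on n vertices whose adjacency matrix has second-largest eigenvalue λ₂. Then for any U ⊆ V(G) with |U| = k, the number of edges inside U satisfies e(U) ≤ d k²/(2n) + λ₂ (k/2 − k²/(2n)). -/
open Matrix Finset

lemma stmt7_count (n : ℕ) (G : SimpleGraph (Fin n)) [DecidableRel G.Adj]
    (U : Finset (Fin n)) :
    2 * (G.induce (↑U : Set (Fin n))).edgeSet.ncard
      = ∑ u ∈ U, ∑ w ∈ U, (if G.Adj u w then 1 else 0) := by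
  classical
  haveI : DecidableRel (G.induce (↑U : Set (Fin n))).Adj :=
    fun a b => inferInstanceAs (Decidable (G.Adj a b))
  rw [Set.ncard_eq_toFinset_card', ← SimpleGraph.edgeFinset,
    ← SimpleGraph.sum_degrees_eq_twice_card_edges]
  have hdeg : ∀ a : (↑U : Set (Fin n)), (G.induce (↑U : Set (Fin n))).degree a
      = ∑ b : (↑U : Set (Fin n)), if G.Adj ↑a ↑b then 1 else 0 := by
    intro a
    rw [SimpleGraph.degree, SimpleGraph.neighborFinset_eq_filter, Finset.card_filter]
    exact Finset.sum_congr rfl fun b _ => if_congr Iff.rfl rfl rfl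
  rw [Finset.sum_congr rfl (fun a _ => hdeg a)]
  rw [Finset.sum_set_coe (f := fun u => ∑ b : (↑U : Set (Fin n)), if G.Adj u ↑b then 1 else 0)
    (s := (↑U : Set (Fin n))), Finset.toFinset_coe]
  refine Finset.sum_congr rfl fun u hu => ?_
  rw [Finset.sum_set_coe (f := fun w => if G.Adj u w then 1 else 0)
    (s := (↑U : Set (Fin n))), Finset.toFinset_coe]

theorem stmt7 (n : ℕ) (hn : 1 < n) (G : SimpleGraph (Fin n)) [DecidableRel G.Adj]
    (d : ℕ) (hreg : G.IsRegularOfDegree d)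
    (v : Fin n → (Fin n → ℝ)) (lam : Fin n → ℝ)
    (heig : ∀ i, (G.adjMatrix ℝ).mulVec (v i) = lam i • v i)
    (horth : ∀ i j, dotProduct (v i) (v j) = if i = j then 1 else 0)
    (hmono : ∀ i j : Fin n, i ≤ j → lam j ≤ lam i)
    (hl1 : lam ⟨0, by omega⟩ = d)
    (U : Finset (Fin n)) (k : ℕ) (hU : U.card = k) :
    ((G.induce (↑U : Set (Fin n))).edgeSet.ncard : ℝ)
      ≤ d * k ^ 2 / (2 * n) + lam ⟨1, hn⟩ * (k / 2 - k ^ 2 / (2 * n)) := by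
  classical
  set i0 : Fin n := ⟨0, by omega⟩ with hi0
  set i1 : Fin n := ⟨1, hn⟩ with hi1
  set A := G.adjMatrix ℝ with hA
  set x : Fin n → ℝ := fun i => if i ∈ U then 1 else 0 with hxdef
  set M : Matrix (Fin n) (Fin n) ℝ := Matrix.of v with hM
  set c : Fin n → ℝ := M *ᵥ x with hc
  have step : ∀ f : Fin n → ℝ, ∑ u, (if u ∈ U then (1:ℝ) else 0) * f u = ∑ u ∈ U, f u := by
    intro f
    simp only [ite_mul, one_mul, zero_mul]
    rw [Finset.sum_ite_mem, Finset.univ_inter]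
  -- edge count as quadratic form
  have hxAx : ((G.induce (↑U : Set (Fin n))).edgeSet.ncard : ℝ) * 2 = x ⬝ᵥ (A *ᵥ x) := by
    have h0 := stmt7_count n G U
    have h1 : ((2 * (G.induce (↑U : Set (Fin n))).edgeSet.ncard : ℕ) : ℝ)
        = ∑ u ∈ U, ∑ w ∈ U, (if G.Adj u w then (1:ℝ) else 0) := by
      rw [h0]; push_cast; simp
    have h2 : x ⬝ᵥ (A *ᵥ x) = ∑ u ∈ U, ∑ w ∈ U, (if G.Adj u w then (1:ℝ) else 0) := by
      calc x ⬝ᵥ (A *ᵥ x)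
          = ∑ u, (if u ∈ U then (1:ℝ) else 0) * (∑ w, A u w * (if w ∈ U then 1 else 0)) := rfl
        _ = ∑ u ∈ U, ∑ w, A u w * (if w ∈ U then (1:ℝ) else 0) := step _
        _ = ∑ u ∈ U, ∑ w, (if w ∈ U then (1:ℝ) else 0) * A u w := by
            exact Finset.sum_congr rfl fun u _ =>
              Finset.sum_congr rfl fun w _ => mul_comm _ _
        _ = ∑ u ∈ U, ∑ w ∈ U, A u w := Finset.sum_congr rfl fun u _ => step _
        _ = ∑ u ∈ U, ∑ w ∈ U, (if G.Adj u w then (1:ℝ) else 0) := by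
            exact Finset.sum_congr rfl fun u _ => Finset.sum_congr rfl fun w _ => by
              simp [hA]
    rw [h2, ← h1]; push_cast; ring
  -- orthogonality matrix facts
  have hMMt : M * Mᵀ = 1 := by
    ext i j
    simpa [hM, Matrix.mul_apply, Matrix.one_apply, dotProduct] using horth i j
  have hMtM : Mᵀ * M = 1 := mul_eq_one_comm.mp hMMt
  have hxc : Mᵀ *ᵥ c = x := by
    rw [hc, Matrix.mulVec_mulVec, hMtM, Matrix.one_mulVec]
  have hexp : ∀ y : Fin n → ℝ, Mᵀ *ᵥ (M *ᵥ y) = ∑ i, (M *ᵥ y) i • v i := by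
    intro y
    ext j
    simp only [Matrix.mulVec, dotProduct, Matrix.transpose_apply, Finset.sum_apply,
      Pi.smul_apply, smul_eq_mul]
    exact Finset.sum_congr rfl fun i _ => mul_comm _ _
  have hxsum : x = ∑ i, c i • v i := by rw [← hxc, hc]; exact hexp x
  have hci : ∀ i, c i = v i ⬝ᵥ x := fun i => rfl
  have hxvi : ∀ i, x ⬝ᵥ v i = c i := fun i => by rw [hci, dotProduct_comm]
  have hxx : x ⬝ᵥ x = (k : ℝ) := by
    simp [dotProduct, hxdef, ite_mul, ← hU]
  have hcc : ∑ i, c i ^ 2 = (k : ℝ) := by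
    have h1 : c ⬝ᵥ c = x ⬝ᵥ x := by
      calc c ⬝ᵥ (M *ᵥ x) = (c ᵥ* M) ⬝ᵥ x := dotProduct_mulVec _ _ _
        _ = (Mᵀ *ᵥ c) ⬝ᵥ x := by rw [Matrix.mulVec_transpose]
        _ = x ⬝ᵥ x := by rw [hxc]
    rw [← hxx, ← h1]
    simp [dotProduct, sq]
  have hds : ∀ (y : Fin n → ℝ) (f : Fin n → ℝ),
      y ⬝ᵥ (∑ i, f i • v i) = ∑ i, f i * (y ⬝ᵥ v i) := by
    intro y f
    simp only [dotProduct, Finset.sum_apply, Pi.smul_apply, smul_eq_mul,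
      Finset.mul_sum]
    rw [Finset.sum_comm]
    exact Finset.sum_congr rfl fun i _ => Finset.sum_congr rfl fun j _ => by ring
  have hQ : x ⬝ᵥ (A *ᵥ x) = ∑ i, lam i * c i ^ 2 := by
    have hAx : A *ᵥ x = ∑ i, (c i * lam i) • v i := by
      rw [hxsum, ← A.mulVecLin_apply, map_sum]
      refine Finset.sum_congr rfl fun i _ => ?_
      rw [_root_.map_smul, A.mulVecLin_apply, heig i, smul_smul]
    rw [hAx, hds]
    refine Finset.sum_congr rfl fun i _ => ?_
    rw [hxvi]; ring
  -- eigenvalue bounds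
  have hld : ∀ i, lam i ≤ (d : ℝ) := fun i =>
    hl1 ▸ hmono i0 i (by rw [Fin.le_def]; exact Nat.zero_le _)
  have hLd : lam i1 ≤ (d : ℝ) := hld i1
  have hiL : ∀ i : Fin n, i ≠ i0 → lam i ≤ lam i1 := by
    intro i hi
    refine hmono i1 i ?_
    rw [Fin.le_def]
    show 1 ≤ i.val
    have : i.val ≠ 0 := fun h => hi (Fin.ext h)
    omega
  have hcsq : ∀ i, (0:ℝ) ≤ c i ^ 2 := fun i => sq_nonneg _
  have hnpos : (0:ℝ) < n := by positivity
  have hne : (n:ℝ) ≠ 0 := ne_of_gt hnpos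
  rcases eq_or_lt_of_le hLd with hcase | hcase
  · -- lam i1 = d : trivial bound 2e(U) ≤ d k
    have hbound : x ⬝ᵥ (A *ᵥ x) ≤ (d : ℝ) * k := by
      rw [hQ, ← hcc, Finset.mul_sum]
      exact Finset.sum_le_sum fun i _ => mul_le_mul_of_nonneg_right (hld i) (hcsq i)
    have h2e := hxAx ▸ hbound
    have hrhs : (d:ℝ) * (k:ℝ)^2/(2*n) + (d:ℝ)*((k:ℝ)/2 - (k:ℝ)^2/(2*n)) = (d:ℝ)*k/2 := by
      field_simp; ring
    rw [hcase, hrhs]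
    linarith [h2e]
  · -- lam i1 < d
    set o : Fin n → ℝ := Function.const (Fin n) 1 with ho
    set b : Fin n → ℝ := M *ᵥ o with hb
    have hbi : ∀ i, b i = v i ⬝ᵥ o := fun i => rfl
    have hAo : A *ᵥ o = (d : ℝ) • o := by
      ext u
      rw [SimpleGraph.adjMatrix_mulVec_const_apply_of_regular hreg]
      simp [ho]
    have hb0 : ∀ i : Fin n, i ≠ i0 → b i = 0 := by
      intro i hi
      have h1 : lam i * b i = d * b i := by
        have e1 : v i ⬝ᵥ (A *ᵥ o) = (A *ᵥ v i) ⬝ᵥ o := by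
          rw [dotProduct_mulVec, ← Matrix.mulVec_transpose,
            SimpleGraph.transpose_adjMatrix]
        have e2 : v i ⬝ᵥ (A *ᵥ o) = (d:ℝ) * b i := by
          rw [hAo, dotProduct_smul, hbi]; simp
        have e3 : (A *ᵥ v i) ⬝ᵥ o = lam i * b i := by
          rw [heig i, smul_dotProduct, hbi]; simp
        rw [← e3, ← e1, e2]
      have hz : (lam i - d) * b i = 0 := by ring_nf; ring_nf at h1; linarith [h1]
      rcases mul_eq_zero.mp hz with h | h
      · exfalso
        have h3 := hiL i hi
        have : lam i < (d:ℝ) := lt_of_le_of_lt h3 hcase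
        linarith
      · exact h
    have hosum : o = ∑ i, b i • v i := by
      have h1 : Mᵀ *ᵥ (M *ᵥ o) = o := by
        rw [Matrix.mulVec_mulVec, hMtM, Matrix.one_mulVec]
      rw [← h1, hexp o]
    have hob0 : o = b i0 • v i0 := by
      rw [hosum, Finset.sum_eq_single i0]
      · intro i _ hi; rw [hb0 i hi, zero_smul]
      · intro h; exact absurd (Finset.mem_univ i0) h
    have hox : o ⬝ᵥ x = (k : ℝ) := by
      simp [dotProduct, ho, hxdef, ← hU]
    have hbc : b i0 * c i0 = (k : ℝ) := by
      have h1 := hox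
      rw [hob0, smul_dotProduct, ← hci i0, smul_eq_mul] at h1
      exact h1
    have hoo : o ⬝ᵥ o = (n : ℝ) := by simp [dotProduct, ho]
    have hbsq : b i0 * b i0 = (n : ℝ) := by
      have hvsq : v i0 ⬝ᵥ v i0 = 1 := by rw [horth]; simp
      have h1 := hoo
      conv_lhs at h1 => rw [hob0]
      rw [smul_dotProduct, dotProduct_smul, hvsq, smul_eq_mul, smul_eq_mul,
        mul_one] at h1
      exact h1
    have hc0 : c i0 ^ 2 * n = (k:ℝ) ^ 2 := by nlinarith [hbc, hbsq]
    have hc0' : c i0 ^ 2 = (k:ℝ)^2 / n := by rw [eq_div_iff hne]; exact hc0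
    -- main bound
    have hbound : x ⬝ᵥ (A *ᵥ x) ≤ (d:ℝ) * c i0 ^ 2 + lam i1 * ((k:ℝ) - c i0 ^ 2) := by
      rw [hQ]
      have hsplit : ∑ i, lam i * c i ^ 2
          = lam i0 * c i0 ^ 2 + ∑ i ∈ Finset.univ.erase i0, lam i * c i ^ 2 :=
        (Finset.add_sum_erase Finset.univ (fun i => lam i * c i ^ 2)
          (Finset.mem_univ i0)).symm
      have h2 : ∑ i ∈ Finset.univ.erase i0, c i ^ 2 = (k:ℝ) - c i0 ^ 2 := by
        rw [eq_sub_iff_add_eq, add_comm]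
        exact (Finset.add_sum_erase Finset.univ (fun i => c i ^ 2)
          (Finset.mem_univ i0)).trans hcc
      have hrest : ∑ i ∈ Finset.univ.erase i0, lam i * c i ^ 2
          ≤ lam i1 * ((k:ℝ) - c i0 ^ 2) := by
        rw [← h2, Finset.mul_sum]
        refine Finset.sum_le_sum fun i hi => ?_
        exact mul_le_mul_of_nonneg_right (hiL i (Finset.mem_erase.mp hi).1) (hcsq i)
      calc ∑ i, lam i * c i ^ 2
          = lam i0 * c i0 ^ 2 + ∑ i ∈ Finset.univ.erase i0, lam i * c i ^ 2 := hsplit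
        _ ≤ lam i0 * c i0 ^ 2 + lam i1 * ((k:ℝ) - c i0 ^ 2) := by linarith [hrest]
        _ = (d:ℝ) * c i0 ^ 2 + lam i1 * ((k:ℝ) - c i0 ^ 2) := by rw [hl1]
    have hfin := hxAx ▸ hbound
    rw [hc0'] at hfin
    have hrhs : (d:ℝ)*(k:ℝ)^2/(2*(n:ℝ)) + lam i1 * ((k:ℝ)/2 - (k:ℝ)^2/(2*n))
        = ((d:ℝ) * ((k:ℝ)^2/n) + lam i1 * ((k:ℝ) - (k:ℝ)^2/n))/2 := by
      field_simp
    rw [hrhs]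
    linarith [hfin]
end

section
/- Let n, k, s be positive integers with 2s + 1 ≤ n and k ≥ s + 2. Then for every U ⊆ V(C_n^s) with |U| = k, e(U) ≤ C(k,2) − ((s+1)/2) · ⌊k/(s+1)⌋ · (⌊k/(s+1)⌋ − 1). -/
/-- The s-th power of the cycle graph on `ZMod n`: `u ~ v` iff
`1 ≤ min((u-v) mod n, (v-u) mod n) ≤ s`. -/
def cyclePow (n s : ℕ) : SimpleGraph (ZMod n) :=
  SimpleGraph.fromRel (fun u v => min ((u - v).val) ((v - u).val) ≤ s)

open Finset SimpleGraph

lemma cyclePow_adj {n s : ℕ} {u v : ZMod n} (h : (cyclePow n s).Adj u v) :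
    u ≠ v ∧ min ((u - v).val) ((v - u).val) ≤ s := by
  rw [cyclePow, SimpleGraph.fromRel_adj] at h
  refine ⟨h.1, ?_⟩
  rcases h.2 with h2 | h2
  · exact h2
  · rwa [min_comm]

lemma induced_degree_le (n s : ℕ) [NeZero n] (U : Set (ZMod n))
    [Fintype U] [DecidableRel ((cyclePow n s).induce U).Adj] (w : U) :
    ((cyclePow n s).induce U).degree w ≤ 2 * s := by
  have hsub : (((cyclePow n s).induce U).neighborFinset w).image (Subtype.val) ⊆
      (Finset.Icc 1 s).image (fun d : ℕ => (w : ZMod n) + d) ∪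
      (Finset.Icc 1 s).image (fun d : ℕ => (w : ZMod n) - d) := by
    intro x hx
    simp only [Finset.mem_image, SimpleGraph.mem_neighborFinset] at hx
    obtain ⟨y, hy, rfl⟩ := hx
    have hadj : (cyclePow n s).Adj (w : ZMod n) (y : ZMod n) := hy
    obtain ⟨hne, hmin⟩ := cyclePow_adj hadj
    have hne' : (w : ZMod n) ≠ (y : ZMod n) := fun h => hne (by exact_mod_cast h)
    simp only [Finset.mem_union, Finset.mem_image, Finset.mem_Icc]
    rcases le_or_gt (((w : ZMod n) - y).val) (((y : ZMod n) - w).val) with hc | hc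
    · right
      refine ⟨((w : ZMod n) - y).val, ⟨?_, by omega⟩, ?_⟩
      · have : ((w : ZMod n) - y) ≠ 0 := sub_ne_zero.2 hne'
        have := (ZMod.val_eq_zero _).not.2 this
        omega
      · rw [ZMod.natCast_val, ZMod.cast_id]
        ring
    · left
      refine ⟨((y : ZMod n) - w).val, ⟨?_, by omega⟩, ?_⟩
      · have : ((y : ZMod n) - w) ≠ 0 := sub_ne_zero.2 (Ne.symm hne')
        have := (ZMod.val_eq_zero _).not.2 this
        omega
      · rw [ZMod.natCast_val, ZMod.cast_id]
        ring
  have h1 : ((cyclePow n s).induce U).degree w = ((((cyclePow n s).induce U).neighborFinset w).image (Subtype.val)).card := by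
    rw [Finset.card_image_of_injective _ Subtype.val_injective]
    rfl
  rw [h1]
  refine le_trans (Finset.card_le_card hsub) (le_trans (Finset.card_union_le _ _) ?_)
  have ha := Finset.card_image_le (s := Finset.Icc 1 s) (f := fun d : ℕ => (w : ZMod n) + d)
  have hb := Finset.card_image_le (s := Finset.Icc 1 s) (f := fun d : ℕ => (w : ZMod n) - d)
  simp only [Nat.card_Icc] at ha hb ⊢
  omega

theorem stmt9 (n s k : ℕ) [NeZero n] (hs : 0 < s) (hk : 0 < k)
    (h1 : 2 * s + 1 ≤ n) (h2 : s + 2 ≤ k)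
    (U : Set (ZMod n)) (hU : U.ncard = k) :
    (((cyclePow n s).induce U).edgeSet.ncard : ℝ)
      ≤ (k.choose 2 : ℝ) - ((s : ℝ) + 1) / 2 * ((k / (s + 1) : ℕ) : ℝ)
          * (((k / (s + 1) : ℕ) : ℝ) - 1) := by
  classical
  haveI : Fintype U := (Set.toFinite U).fintype
  set G := (cyclePow n s).induce U with hG
  haveI : DecidableRel G.Adj := Classical.decRel _
  have hcardU : Fintype.card U = k := by
    rw [← Set.toFinset_card, ← Set.ncard_eq_toFinset_card', hU]
  have hE : G.edgeSet.ncard = G.edgeFinset.card := by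
    simp [Set.ncard_eq_toFinset_card', SimpleGraph.edgeFinset]
  set q := k / (s + 1) with hq
  have hq1 : 1 ≤ q := (Nat.one_le_div_iff (by omega)).2 (by omega)
  have hqk : (s + 1) * q ≤ k := by
    rw [mul_comm]; exact Nat.div_mul_le_self k (s+1)
  rcases eq_or_lt_of_le hq1 with hq1' | hq2
  · -- q = 1
    have hEle : G.edgeFinset.card ≤ k.choose 2 := by
      simpa [hcardU] using G.card_edgeFinset_le_card_choose_two
    rw [hE, ← hq1']
    push_cast
    have : (G.edgeFinset.card : ℝ) ≤ (k.choose 2 : ℝ) := by exact_mod_cast hEle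
    linarith
  · -- q ≥ 2
    have hdeg : ∀ w : U, G.degree w ≤ 2 * s := induced_degree_le n s U
    have hsum : ∑ w : U, G.degree w ≤ Fintype.card U * (2 * s) := by
      calc ∑ w : U, G.degree w ≤ ∑ _w : U, 2 * s := Finset.sum_le_sum (fun w _ => hdeg w)
        _ = Fintype.card U * (2 * s) := by simp [Finset.card_univ, mul_comm]
    have hhand := G.sum_degrees_eq_twice_card_edges
    have hEks : G.edgeFinset.card ≤ k * s := by
      rw [hhand, hcardU] at hsum
      have hring : k * (2 * s) = 2 * (k * s) := by ring
      omega
    rw [hE]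
    have hcast : (G.edgeFinset.card : ℝ) ≤ (k : ℝ) * s := by exact_mod_cast hEks
    rw [Nat.cast_choose_two]
    have hq2' : (2 : ℝ) ≤ (q : ℝ) := by exact_mod_cast hq2
    have hqk' : ((s : ℝ) + 1) * q ≤ k := by exact_mod_cast hqk
    have hs' : (1 : ℝ) ≤ s := by exact_mod_cast hs
    nlinarith [mul_nonneg (sub_nonneg.2 hqk') (by linarith : (0:ℝ) ≤ (q:ℝ) - 1),
      mul_nonneg (by positivity : (0:ℝ) ≤ (k:ℝ)) (mul_nonneg (by linarith : (0:ℝ) ≤ (s:ℝ)) (by linarith : (0:ℝ) ≤ (q:ℝ) - 2)),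
      mul_nonneg (by linarith : (0:ℝ) ≤ (s:ℝ)) (by linarith : (0:ℝ) ≤ (q:ℝ) - 2)]
end

section
/- Let G be a finite simple graph with clique number ω = ω(G) and let U ⊆ V(G) with |U| = k. Then the number of edges of the induced subgraph on U is at most C(k,2) − (ω/2) · ⌊k/ω⌋ · (⌊k/ω⌋ − 1). -/
open Finset SimpleGraph

private lemma turan_edge_count (n r : ℕ) (hr : 0 < r) :
    2 * #(turanGraph n r).edgeFinset + (n + r * ((n / r) * (n / r - 1))) ≤ n * n := by
  set q := n / r with hq
  have hqr : q * r ≤ n := Nat.div_mul_le_self n r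
  let f : Fin n → Fin r := fun v => ⟨v.val % r, Nat.mod_lt _ hr⟩
  -- two_mul edges = # pairs with different residues
  have h2e : 2 * #(turanGraph n r).edgeFinset
      = #((univ : Finset (Fin n × Fin n)).filter fun p => ¬ f p.1 = f p.2) := by
    rw [two_mul_card_edgeFinset]
    congr 1
    apply Finset.filter_congr
    intro p _
    simp only [turanGraph, f, eq_iff_iff]
    constructor
    · intro h h'
      exact h (by simpa using congrArg Fin.val h')
    · intro h h'
      exact h (Fin.ext (by simpa using h'))
  have hpartition :
      #((univ : Finset (Fin n × Fin n)).filter fun p => ¬ f p.1 = f p.2)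
        + #((univ : Finset (Fin n × Fin n)).filter fun p => f p.1 = f p.2)
        = n * n := by
    rw [add_comm]
    rw [Finset.card_filter_add_card_filter_not]
    simp [Finset.card_univ]
  -- fibers
  have hfiber : ∀ i : Fin r,
      ((univ : Finset (Fin n × Fin n)).filter fun p => f p.1 = f p.2).filter
          (fun p => f p.1 = i)
        = ((univ : Finset (Fin n)).filter fun v => f v = i) ×ˢ
            ((univ : Finset (Fin n)).filter fun v => f v = i) := by
    intro i
    ext ⟨a, b⟩
    simp only [Finset.mem_filter, Finset.mem_product, Finset.mem_univ, true_and]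
    constructor
    · rintro ⟨h1, h2⟩; exact ⟨h2, h2 ▸ h1.symm⟩
    · rintro ⟨h1, h2⟩; exact ⟨h1.trans h2.symm, h1⟩
  have hsame : #((univ : Finset (Fin n × Fin n)).filter fun p => f p.1 = f p.2)
      = ∑ i : Fin r, #((univ : Finset (Fin n)).filter fun v => f v = i)
          * #((univ : Finset (Fin n)).filter fun v => f v = i) := by
    rw [Finset.card_eq_sum_card_fiberwise
      (f := fun p : Fin n × Fin n => f p.1) (t := univ) (fun x _ => mem_univ _)]
    refine Finset.sum_congr rfl fun i _ => ?_
    rw [hfiber i, Finset.card_product]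
  have hsumfib : ∑ i : Fin r, #((univ : Finset (Fin n)).filter fun v => f v = i) = n := by
    rw [← Finset.card_eq_sum_card_fiberwise (f := f) (t := univ) (fun x _ => mem_univ _)]
    simp
  -- each fiber has at least q elements
  have hfib_ge : ∀ i : Fin r, q ≤ #((univ : Finset (Fin n)).filter fun v => f v = i) := by
    intro i
    have hg : ∀ j : Fin q, i.val + j.val * r < n := by
      intro j
      have h1 : j.val * r + r ≤ q * r := by
        have : j.val + 1 ≤ q := j.2
        calc j.val * r + r = (j.val + 1) * r := by ring
          _ ≤ q * r := Nat.mul_le_mul_right r this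
      have := i.2
      omega
    let g : Fin q → Fin n := fun j => ⟨i.val + j.val * r, hg j⟩
    have hmem : ∀ j : Fin q, g j ∈ (univ : Finset (Fin n)).filter fun v => f v = i := by
      intro j
      simp only [Finset.mem_filter, Finset.mem_univ, true_and, f, g]
      exact Fin.ext (by simp [Nat.add_mul_mod_self_right, Nat.mod_eq_of_lt i.2])
    have hinj : Function.Injective g := by
      intro j1 j2 h
      have : i.val + j1.val * r = i.val + j2.val * r := congrArg Fin.val h
      have : j1.val * r = j2.val * r := by omega
      exact Fin.ext (Nat.eq_of_mul_eq_mul_right hr this)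
    calc q = Fintype.card (Fin q) := (Fintype.card_fin q).symm
      _ ≤ _ := Finset.card_le_card_of_injOn g (fun j _ => hmem j) (hinj.injOn)
  -- each term bound
  have hstep : ∀ c : ℕ, q ≤ c → c + q * (q - 1) ≤ c * c := by
    intro c hc
    have h1 : q - 1 ≤ c - 1 := by omega
    have h2 := Nat.mul_le_mul hc h1
    have h3 : c * (c - 1) + c = c * c := by
      cases c with
      | zero => simp
      | succ m => simp only [Nat.succ_sub_one]; ring
    omega
  have hbound : n + r * (q * (q - 1))
      ≤ #((univ : Finset (Fin n × Fin n)).filter fun p => f p.1 = f p.2) := by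
    rw [hsame]
    calc n + r * (q * (q - 1))
        = ∑ i : Fin r, (#((univ : Finset (Fin n)).filter fun v => f v = i) + q * (q - 1)) := by
          rw [Finset.sum_add_distrib, hsumfib, Finset.sum_const, Finset.card_univ,
            Fintype.card_fin, smul_eq_mul]
      _ ≤ _ := Finset.sum_le_sum fun i _ => hstep _ (hfib_ge i)
  omega

theorem stmt10 {V : Type*} [Fintype V] (G : SimpleGraph V)
    (U : Set V) (k : ℕ) (hU : U.ncard = k) :
    ((G.induce U).edgeSet.ncard : ℝ)
      ≤ (k.choose 2 : ℝ) - (G.cliqueNum : ℝ) / 2 * ((k / G.cliqueNum : ℕ) : ℝ)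
          * (((k / G.cliqueNum : ℕ) : ℝ) - 1) := by
  classical
  set ω := G.cliqueNum with hω
  set q := k / ω with hqdef
  have hcardU : Fintype.card U = k := by
    rw [← Nat.card_eq_fintype_card, Nat.card_coe_set_eq, hU]
  set H := G.induce U with hH
  have hecard : H.edgeSet.ncard = #H.edgeFinset := by
    rw [← Nat.card_coe_set_eq, Nat.card_eq_fintype_card, edgeFinset, Set.toFinset_card]
  have hck : #H.edgeFinset ≤ k.choose 2 := by
    calc #H.edgeFinset ≤ (Fintype.card U).choose 2 := H.card_edgeFinset_le_card_choose_two
      _ = k.choose 2 := by rw [hcardU]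
  by_cases hq1 : q ≤ 1
  ·
    have hterm : ((q : ℝ) - 1) ≤ 0 := by
      have : (q : ℝ) ≤ 1 := by exact_mod_cast hq1
      linarith
    have hnn : (0 : ℝ) ≤ (ω : ℝ) / 2 * (q : ℝ) := by positivity
    have h1 : (ω : ℝ) / 2 * (q : ℝ) * ((q : ℝ) - 1) ≤ 0 :=
      mul_nonpos_of_nonneg_of_nonpos hnn hterm
    have h2 : (H.edgeSet.ncard : ℝ) ≤ (k.choose 2 : ℝ) := by
      rw [hecard]; exact_mod_cast hck
    linarith
  · push_neg at hq1
    have hω_pos : 0 < ω := by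
      rcases Nat.eq_zero_or_pos ω with h | h
      · rw [hqdef, h] at hq1; simp at hq1
      · exact h
    -- H is cliquefree of order ω + 1
    have hHfree : H.CliqueFree (ω + 1) := by
      have hGfree : G.CliqueFree (ω + 1) := by
        intro s hs
        have := SimpleGraph.IsClique.card_le_cliqueNum (G := G) (tc := hs.1)
        rw [hs.2] at this
        omega
      exact hGfree.comap (SimpleGraph.Embedding.induce U).isContained
    -- Turán-maximal graph on U
    obtain ⟨T, _, hT⟩ := exists_isTuranMaximal (V := U) hω_pos
    have hle : #H.edgeFinset ≤ #T.edgeFinset := hT.2 hHfree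
    obtain ⟨φ⟩ := hT.nonempty_iso_turanGraph
    rw [hcardU] at φ
    have hTeq : #T.edgeFinset = #(turanGraph k ω).edgeFinset := φ.card_edgeFinset_eq
    have hcount := turan_edge_count k ω hω_pos
    rw [← hqdef] at hcount
    -- cast to ℝ
    have h2 : 2 * (#H.edgeFinset : ℝ) + (k : ℝ) + (ω : ℝ) * ((q : ℝ) * ((q : ℝ) - 1))
        ≤ (k : ℝ) * (k : ℝ) := by
      have hq1' : 1 ≤ q := hq1.le
      have hcast : ((q * (q - 1) : ℕ) : ℝ) = (q : ℝ) * ((q : ℝ) - 1) := by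
        push_cast [Nat.cast_sub hq1']
        ring
      have : (2 * #H.edgeFinset + (k + ω * (q * (q - 1))) : ℕ) ≤ (k * k : ℕ) := by
        calc 2 * #H.edgeFinset + (k + ω * (q * (q - 1)))
            ≤ 2 * #(turanGraph k ω).edgeFinset + (k + ω * (q * (q - 1))) := by
              rw [← hTeq]; omega
          _ ≤ k * k := hcount
      have := (Nat.cast_le (α := ℝ)).mpr this
      push_cast at this
      rw [Nat.cast_sub hq1'] at this
      push_cast at this
      linarith
    have hchoose : (k.choose 2 : ℝ) = (k : ℝ) * ((k : ℝ) - 1) / 2 := Nat.cast_choose_two (K := ℝ) k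
    rw [hecard]
    rw [hchoose]
    linarith
end
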